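/- Let r be a vertex of G = K(m, 2) for m ≥ 5 and t ≥ 1, and let y be a vertex at distance 2 from r. Then the configuration C_{t,2} with 4t − 1 pebbles on y, one pebble on every other vertex at distance 2 from r, and zero pebbles elsewhere (so |C_{t,2}| = 4t + 2(m−2) − 2) is not t-fold r-solvable. -/

import Mathlib

/-- A single pebbling step: remove two pebbles from `u` and add one to an adjacent `v`. -/
def PebblingStep {V : Type} [DecidableEq V] (G : SimpleGraph V) (C C' : V → ℕ) : Prop :=
  ∃ u v : V, G.Adj u v ∧ 2 ≤ C u ∧
    C' = fun w => if w = u then C u - 2 else if w = v then C v + 1 else C w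

/-- `C` solves the target distribution `D`: some sequence of pebbling steps reaches a
configuration with at least `D v` pebbles on each vertex `v`. -/
def Solvable {V : Type} [DecidableEq V] (G : SimpleGraph V) (C D : V → ℕ) : Prop :=
  ∃ C' : V → ℕ, Relation.ReflTransGen (PebblingStep G) C C' ∧ ∀ v, D v ≤ C' v

/-- The distribution with `t` pebbles stacked on `r` and none elsewhere. -/
def stack {V : Type} [DecidableEq V] (r : V) (t : ℕ) : V → ℕ :=
  fun v => if v = r then t else 0

/-- The pebbling number of the demand `D` in `G`: the smallest `m` such that every
configuration of size `m` is `D`-solvable. -/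
noncomputable def pebblingNumber {V : Type} [Fintype V] [DecidableEq V] (G : SimpleGraph V) (D : V → ℕ) : ℕ :=
  sInf {m | ∀ C : V → ℕ, (∑ v, C v) = m → Solvable G C D}

/-- The `t`-fold pebbling number of `G`. -/
noncomputable def tPebblingNumber {V : Type} [Fintype V] [DecidableEq V]
    (G : SimpleGraph V) (t : ℕ) : ℕ :=
  Finset.univ.sup fun r => pebblingNumber G (stack r t)

/-- Reaching `C'` from `C` by exactly `k` pebbling steps. -/
inductive StepsN {V : Type} [DecidableEq V] (G : SimpleGraph V) : ℕ → (V → ℕ) → (V → ℕ) → Prop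
  | refl (C : V → ℕ) : StepsN G 0 C C
  | tail {k : ℕ} {C C' C'' : V → ℕ} :
      StepsN G k C C' → PebblingStep G C' C'' → StepsN G (k + 1) C C''

/-- `C` has an `r`-solution of cost at most `c` (cost = number of pebbling steps plus one). -/
def CheaplySolvable {V : Type} [DecidableEq V] (G : SimpleGraph V) (C : V → ℕ) (r : V) (c : ℕ) : Prop :=
  ∃ (k : ℕ) (C' : V → ℕ), StepsN G k C C' ∧ 1 ≤ C' r ∧ k + 1 ≤ c

/-- The eccentricity of a vertex: the maximum distance to any other vertex. -/
noncomputable def eccentricity {V : Type} [Fintype V] (G : SimpleGraph V) (r : V) : ℕ :=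
  Finset.univ.sup fun v => G.dist r v

/-- A vertex is simplicial if its neighborhood induces a complete graph. -/
def IsSimplicial {V : Type} (G : SimpleGraph V) (v : V) : Prop :=
  ∀ a b : V, G.Adj v a → G.Adj v b → a ≠ b → G.Adj a b

/-- A 2-path is either `K₂` or `K₃`, or a graph with exactly two simplicial vertices
`u` and `v` such that the neighborhood of `v` induces `K₂` and `G - v` is a 2-path. -/
inductive IsTwoPath : {V : Type} → SimpleGraph V → Prop
  | complete2 {V : Type} (G : SimpleGraph V) :
      Nat.card V = 2 → (∀ a b : V, a ≠ b → G.Adj a b) → IsTwoPath G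
  | complete3 {V : Type} (G : SimpleGraph V) :
      Nat.card V = 3 → (∀ a b : V, a ≠ b → G.Adj a b) → IsTwoPath G
  | extend {V : Type} (G : SimpleGraph V) (u v : V) :
      u ≠ v →
      {w : V | IsSimplicial G w} = {u, v} →
      (G.neighborSet v).ncard = 2 →
      IsSimplicial G v →
      IsTwoPath (G.induce {w : V | w ≠ v}) →
      IsTwoPath G

/-- The Kneser graph `K(m, h)`: vertices are the `h`-element subsets of `{1, …, m}`,
adjacent iff disjoint. -/
def kneserGraph (m h : ℕ) : SimpleGraph {s : Finset (Fin m) // s.card = h} :=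
  SimpleGraph.fromRel fun a b => Disjoint a.1 b.1


section AuxMain

abbrev KV (m : ℕ) := {s : Finset (Fin m) // s.card = 2}

lemma kadj {m : ℕ} {a b : KV m} :
    (kneserGraph m 2).Adj a b ↔ Disjoint a.1 b.1 := by
  constructor
  · rintro ⟨hne, h | h⟩
    · exact h
    · exact h.symm
  · intro h
    refine ⟨?_, Or.inl h⟩
    rintro rfl
    rw [disjoint_self] at h
    have := a.2
    simp [h] at this

/-- The weight function used in the potential argument. -/
noncomputable def gW {m : ℕ} (r y : KV m) : KV m → ℕ → ℕ := fun w n =>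
  if w = r then 4 * n
  else if (kneserGraph m 2).dist r w = 1 then 2 * n
  else if w = y then n
  else 2 * (n / 2)

lemma gW_hg {m : ℕ} (r y : KV m) :
    ∀ u v : KV m, (kneserGraph m 2).Adj u v → ∀ a b : ℕ, 2 ≤ a →
      gW r y u (a - 2) + gW r y v (b + 1) ≤ gW r y u a + gW r y v b := by
  intro u v hadj a b ha
  by_cases hvr : v = r
  · subst hvr
    have hur : ¬ (u = v) := hadj.ne
    have hu1 : (kneserGraph m 2).dist v u = 1 :=
      SimpleGraph.dist_eq_one_iff_adj.mpr hadj.symm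
    simp only [gW, if_neg hur, if_pos hu1, if_true, eq_self_iff_true]
    omega
  · have h1 : gW r y v (b + 1) ≤ gW r y v b + 2 := by
      simp only [gW]
      split_ifs <;> omega
    have h2 : gW r y u (a - 2) + 2 ≤ gW r y u a := by
      simp only [gW]
      split_ifs <;> omega
    omega

lemma phi_step {V : Type} [Fintype V] [DecidableEq V] {G : SimpleGraph V}
    (g : V → ℕ → ℕ)
    (hg : ∀ u v : V, G.Adj u v → ∀ a b : ℕ, 2 ≤ a →
      g u (a - 2) + g v (b + 1) ≤ g u a + g v b)
    {C C' : V → ℕ} (h : PebblingStep G C C') :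
    (∑ w, g w (C' w)) ≤ ∑ w, g w (C w) := by
  obtain ⟨u, v, hadj, h2, rfl⟩ := h
  have huv : u ≠ v := hadj.ne
  have hsplit : ∀ D : V → ℕ, (∑ w, g w (D w)) =
      (∑ w ∈ Finset.univ \ ({u, v} : Finset V), g w (D w)) + (g u (D u) + g v (D v)) := by
    intro D
    rw [← Finset.sum_sdiff (Finset.subset_univ ({u, v} : Finset V)), Finset.sum_pair huv]
  rw [hsplit, hsplit]
  have hrest : (∑ w ∈ Finset.univ \ ({u, v} : Finset V),
      g w ((fun w => if w = u then C u - 2 else if w = v then C v + 1 else C w) w))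
      = ∑ w ∈ Finset.univ \ ({u, v} : Finset V), g w (C w) := by
    apply Finset.sum_congr rfl
    intro w hw
    simp only [Finset.mem_sdiff, Finset.mem_insert, Finset.mem_singleton, not_or] at hw
    simp only [if_neg hw.2.1, if_neg hw.2.2]
  rw [hrest]
  have hu : (if u = u then C u - 2 else if u = v then C v + 1 else C u) = C u - 2 := by
    simp
  have hv : (if v = u then C u - 2 else if v = v then C v + 1 else C v) = C v + 1 := by
    simp [huv.symm]
  rw [hu, hv]
  exact Nat.add_le_add_left (hg u v hadj (C u) (C v) h2) _

lemma phi_steps {V : Type} [Fintype V] [DecidableEq V] {G : SimpleGraph V}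
    (g : V → ℕ → ℕ)
    (hg : ∀ u v : V, G.Adj u v → ∀ a b : ℕ, 2 ≤ a →
      g u (a - 2) + g v (b + 1) ≤ g u a + g v b)
    {C C' : V → ℕ} (h : Relation.ReflTransGen (PebblingStep G) C C') :
    (∑ w, g w (C' w)) ≤ ∑ w, g w (C w) := by
  induction h with
  | refl => exact le_refl _
  | tail _ hstep ih => exact le_trans (phi_step g hg hstep) ih

lemma kneser_dist_two {m : ℕ} (hm : 5 ≤ m) (r v : KV m) :
    (kneserGraph m 2).dist r v = 2 ↔ v ≠ r ∧ ¬ Disjoint r.1 v.1 := by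
  constructor
  · intro h
    constructor
    · rintro rfl
      rw [SimpleGraph.dist_self] at h
      omega
    · intro hd
      have : (kneserGraph m 2).dist r v = 1 :=
        SimpleGraph.dist_eq_one_iff_adj.mpr (kadj.mpr hd)
      omega
  · rintro ⟨hvr, hnd⟩
    obtain ⟨x, hx⟩ := Finset.not_disjoint_iff.mp hnd
    have hcard : 2 ≤ ((r.1 ∪ v.1)ᶜ).card := by
      have h1 := Finset.card_union_add_card_inter r.1 v.1
      have hi : 1 ≤ (r.1 ∩ v.1).card :=
        Finset.card_pos.mpr ⟨x, Finset.mem_inter.mpr hx⟩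
      have h2 : ((r.1 ∪ v.1)ᶜ).card = m - (r.1 ∪ v.1).card := by
        rw [Finset.card_compl, Fintype.card_fin]
      have h3 : (r.1 ∪ v.1).card ≤ m := by
        simpa [Fintype.card_fin] using Finset.card_le_card (Finset.subset_univ (r.1 ∪ v.1))
      have hr2 : r.1.card = 2 := r.2
      have hv2 : v.1.card = 2 := v.2
      omega
    obtain ⟨u, hsub, hu2⟩ := Finset.exists_subset_card_eq hcard
    have hdis : ∀ z : Finset (Fin m), z ⊆ r.1 ∪ v.1 → Disjoint z u := by
      intro z hz
      rw [Finset.disjoint_left]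
      intro a ha hau
      exact (Finset.mem_compl.mp (hsub hau)) (hz ha)
    have hadj1 : (kneserGraph m 2).Adj r ⟨u, hu2⟩ :=
      kadj.mpr (hdis r.1 Finset.subset_union_left)
    have hadj2 : (kneserGraph m 2).Adj (⟨u, hu2⟩ : KV m) v :=
      kadj.mpr ((hdis v.1 Finset.subset_union_right).symm)
    have hle : (kneserGraph m 2).dist r v ≤ 2 := by
      have := SimpleGraph.dist_le
        (SimpleGraph.Walk.cons hadj1 (SimpleGraph.Walk.cons hadj2 SimpleGraph.Walk.nil))
      simpa using this
    have hne1 : (kneserGraph m 2).dist r v ≠ 1 := by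
      intro h
      exact hnd (kadj.mp (SimpleGraph.dist_eq_one_iff_adj.mp h))
    have hne0 : (kneserGraph m 2).dist r v ≠ 0 := by
      intro h
      rcases SimpleGraph.dist_eq_zero_iff_eq_or_not_reachable.mp h with h' | h'
      · exact hvr h'.symm
      · exact h' ⟨SimpleGraph.Walk.cons hadj1 (SimpleGraph.Walk.cons hadj2 SimpleGraph.Walk.nil)⟩
    omega

lemma kneser_S_card {m : ℕ} (hm : 5 ≤ m) (r : KV m) :
    (Finset.univ.filter fun v : KV m => (kneserGraph m 2).dist r v = 2).card
      = 2 * (m - 2) := by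
  have hfe : (Finset.univ.filter fun v : KV m => (kneserGraph m 2).dist r v = 2)
      = Finset.univ.filter fun v : KV m => v ≠ r ∧ ¬ Disjoint r.1 v.1 := by
    apply Finset.filter_congr
    intro v _
    simp [kneser_dist_two hm r v]
  rw [hfe]
  have hb : (r.1 ×ˢ r.1ᶜ).card
      = (Finset.univ.filter fun v : KV m => v ≠ r ∧ ¬ Disjoint r.1 v.1).card := by
    apply Finset.card_bij (fun p hp => (⟨{p.1, p.2}, by
      rcases Finset.mem_product.mp hp with ⟨h1, h2⟩
      rw [Finset.card_insert_of_notMem, Finset.card_singleton]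
      simp only [Finset.mem_singleton]
      intro h
      exact (Finset.mem_compl.mp h2) (h ▸ h1)⟩ : KV m))
    · intro p hp
      rcases Finset.mem_product.mp hp with ⟨h1, h2⟩
      simp only [Finset.mem_filter, Finset.mem_univ, true_and]
      constructor
      · intro h
        have : p.2 ∈ r.1 := by
          have := congrArg Subtype.val h
          simp only at this
          rw [← this]
          simp
        exact (Finset.mem_compl.mp h2) this
      · rw [Finset.not_disjoint_iff]
        exact ⟨p.1, h1, by simp⟩
    · intro p hp q hq hpq
      rcases Finset.mem_product.mp hp with ⟨hp1, hp2⟩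
      rcases Finset.mem_product.mp hq with ⟨hq1, hq2⟩
      have h := congrArg Subtype.val hpq
      simp only at h
      have h1 : q.1 ∈ ({p.1, p.2} : Finset (Fin m)) := by rw [h]; simp
      have h2 : q.2 ∈ ({p.1, p.2} : Finset (Fin m)) := by rw [h]; simp
      have hq1' : q.1 = p.1 := by
        rcases Finset.mem_insert.mp h1 with h' | h'
        · exact h'
        · exfalso
          rw [Finset.mem_singleton] at h'
          exact (Finset.mem_compl.mp hp2) (h' ▸ hq1)
      have hq2' : q.2 = p.2 := by
        rcases Finset.mem_insert.mp h2 with h' | h'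
        · exfalso
          exact (Finset.mem_compl.mp hq2) (h' ▸ hp1)
        · exact Finset.mem_singleton.mp h'
      exact Prod.ext hq1'.symm hq2'.symm
    · intro v hv
      rcases Finset.mem_filter.mp hv with ⟨-, hvr, hnd⟩
      obtain ⟨x, hxr, hxv⟩ := Finset.not_disjoint_iff.mp hnd
      have hdiff : (v.1 \ r.1).Nonempty := by
        rw [Finset.sdiff_nonempty]
        intro hsub
        exact hvr (Subtype.ext (Finset.eq_of_subset_of_card_le hsub (by rw [r.2, v.2])))
      obtain ⟨z, hz⟩ := hdiff
      rcases Finset.mem_sdiff.mp hz with ⟨hzv, hzr⟩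
      have hxz : x ≠ z := fun h => hzr (h ▸ hxr)
      refine ⟨(x, z), Finset.mem_product.mpr ⟨hxr, Finset.mem_compl.mpr hzr⟩, ?_⟩
      apply Subtype.ext
      show ({x, z} : Finset (Fin m)) = v.1
      apply Finset.eq_of_subset_of_card_le
      · intro a ha
        rcases Finset.mem_insert.mp ha with h' | h'
        · exact h' ▸ hxv
        · exact (Finset.mem_singleton.mp h') ▸ hzv
      · rw [Finset.card_insert_of_notMem (by simpa using hxz), Finset.card_singleton, v.2]
  rw [← hb, Finset.card_product, r.2, Finset.card_compl, r.2, Fintype.card_fin]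

end AuxMain

theorem kneser_Ct2_unsolvable (m t : ℕ) (hm : 5 ≤ m) (ht : 1 ≤ t)
    (r y : {s : Finset (Fin m) // s.card = 2})
    (hy : (kneserGraph m 2).dist r y = 2)
    (C : {s : Finset (Fin m) // s.card = 2} → ℕ)
    (hC : C = fun v => if v = y then 4 * t - 1
      else if (kneserGraph m 2).dist r v = 2 then 1 else 0) :
    (∑ v, C v) = 4 * t + 2 * (m - 2) - 2 ∧
    ¬ Solvable (kneserGraph m 2) C (stack r t) := by
  have hry : r ≠ y := by
    rintro rfl
    rw [SimpleGraph.dist_self] at hy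
    omega
  constructor
  · -- size of the configuration
    rw [hC]
    rw [← Finset.add_sum_erase _ _ (Finset.mem_univ y)]
    have hy1 : (if y = y then 4 * t - 1
        else if (kneserGraph m 2).dist r y = 2 then 1 else 0) = 4 * t - 1 := by simp
    have hy2 : (∑ v ∈ Finset.univ.erase y, (if v = y then 4 * t - 1
        else if (kneserGraph m 2).dist r v = 2 then 1 else 0))
        = ∑ v ∈ Finset.univ.erase y,
          (if (kneserGraph m 2).dist r v = 2 then (1 : ℕ) else 0) := by
      apply Finset.sum_congr rfl
      intro v hv
      rw [if_neg (Finset.ne_of_mem_erase hv)]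
    rw [hy1, hy2, Finset.sum_ite, Finset.sum_const, Finset.sum_const, smul_eq_mul,
      smul_eq_mul, mul_one, mul_zero, add_zero, Finset.filter_erase,
      Finset.card_erase_of_mem (by simp [hy]), kneser_S_card hm r]
    omega
  · -- unsolvability
    rintro ⟨C', hsteps, hge⟩
    have hphi := phi_steps (gW r y) (gW_hg r y) hsteps
    have hinit : (∑ w, gW r y w (C w)) = 4 * t - 1 := by
      rw [Finset.sum_eq_single_of_mem y (Finset.mem_univ y)]
      · have hCy : C y = 4 * t - 1 := by rw [hC]; simp
        rw [hCy, gW, if_neg (Ne.symm hry), if_neg (by rw [hy]; omega), if_pos rfl]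
      · intro w _ hwy
        have hCw : C w = if (kneserGraph m 2).dist r w = 2 then 1 else 0 := by
          rw [hC]
          exact if_neg hwy
        by_cases hwr : w = r
        · subst hwr
          have : C w = 0 := by
            rw [hCw, if_neg]
            rw [SimpleGraph.dist_self]
            omega
          rw [this, gW, if_pos rfl, mul_zero]
        · by_cases hw1 : (kneserGraph m 2).dist r w = 1
          · have : C w = 0 := by rw [hCw, if_neg (by omega)]
            rw [this, gW, if_neg hwr, if_pos hw1, mul_zero]
          · have hle : C w ≤ 1 := by rw [hCw]; split_ifs <;> omega
            rw [gW, if_neg hwr, if_neg hw1, if_neg hwy]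
            omega
    have hfin : 4 * t ≤ ∑ w, gW r y w (C' w) := by
      have h1 : t ≤ C' r := by
        have := hge r
        rwa [stack, if_pos rfl] at this
      have h2 : gW r y r (C' r) = 4 * C' r := by rw [gW, if_pos rfl]
      calc 4 * t ≤ 4 * C' r := by omega
        _ = gW r y r (C' r) := h2.symm
        _ ≤ ∑ w, gW r y w (C' w) :=
          Finset.single_le_sum (f := fun w => gW r y w (C' w)) (fun i _ => Nat.zero_le _) (Finset.mem_univ r)
    omega
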